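/- Let h, f, g : ℝ → ℝ be functions and let s, t be real numbers with 0 ≤ s ≤ t, h(s) ≠ 0 and h(t) ≠ 0. Let E₁^{[s,t]} be the evolution algebra whose structure matrix is (h(t)/2) times the matrix with constant rows (c₁,c₁,c₁), (c₂,c₂,c₂), (c₃,c₃,c₃), where c₁ = 1/h(s) + f(s), c₂ = 1/h(s) − g(s), c₃ = g(s) − f(s). If (1/h(s)+f(s))·(1/h(s)−g(s))·(g(s)−f(s)) ≠ 0, (g(s)−f(s))·(2/h(s)+f(s)−g(s)) < 0, and (2/h(s))·(1/h(s)+f(s))·(1/h(s)−g(s))·(2/h(s)+f(s)−g(s)) < 0, then E₁^{[s,t]} is isomorphic to the evolution algebra E₉ whose structure matrix has rows (1,0,0), (−1,0,0), (−1,0,0). -/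

import Mathlib

/-- Evolution algebra multiplication on ℝ³ determined by a structure matrix `A`:
`(x ∗_A y) j = ∑ i, x i * y i * A i j`. -/
def evolMul (A : Matrix (Fin 3) (Fin 3) ℝ) (x y : Fin 3 → ℝ) : Fin 3 → ℝ :=
  fun j => ∑ i, x i * y i * A i j

/-- The evolution algebras with structure matrices `A` and `B` are isomorphic:
there is an ℝ-linear equivalence of ℝ³ intertwining the two multiplications. -/
def EvolIso (A B : Matrix (Fin 3) (Fin 3) ℝ) : Prop :=
  ∃ f : (Fin 3 → ℝ) ≃ₗ[ℝ] (Fin 3 → ℝ),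
    ∀ x y, f (evolMul A x y) = evolMul B (f x) (f y)

lemma evolIso_of_matrices (A B F G : Matrix (Fin 3) (Fin 3) ℝ)
    (hFG : F * G = 1) (hGF : G * F = 1)
    (hcomm : ∀ x y, F.mulVec (evolMul A x y) = evolMul B (F.mulVec x) (F.mulVec y)) :
    EvolIso A B := by
  refine ⟨LinearEquiv.ofLinear (Matrix.toLin' F) (Matrix.toLin' G) ?_ ?_, ?_⟩
  · rw [← Matrix.toLin'_mul, hFG, Matrix.toLin'_one]
  · rw [← Matrix.toLin'_mul, hGF, Matrix.toLin'_one]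
  · intro x y
    simpa only [LinearEquiv.ofLinear_apply, Matrix.toLin'_apply] using hcomm x y

set_option maxHeartbeats 1000000 in
lemma key (a₀ a₁ a₂ : ℝ) (ha₀ : a₀ ≠ 0) (ha₁ : a₁ ≠ 0) (ha₂ : a₂ ≠ 0)
    (hP : a₂ * (a₀ + a₁) < 0)
    (hQ : (a₀ + a₁ + a₂) * a₀ * a₁ * (a₀ + a₁) < 0) :
    EvolIso !![a₀,a₀,a₀; a₁,a₁,a₁; a₂,a₂,a₂] !![1,0,0;-1,0,0;-1,0,0] := by
  have hPne : a₀ + a₁ ≠ 0 := by rintro h; rw [h] at hP; simp at hP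
  have hSne : a₀ + a₁ + a₂ ≠ 0 := by rintro h; rw [h] at hQ; simp at hQ
  obtain ⟨α, hα⟩ : ∃ α : ℝ, α^2 = -(1/((a₀ + a₁ + a₂) * a₀ * a₁ * (a₀ + a₁))) := by
    refine ⟨Real.sqrt _, Real.sq_sqrt ?_⟩
    have : 1/((a₀ + a₁ + a₂) * a₀ * a₁ * (a₀ + a₁)) < 0 := one_div_neg.mpr hQ
    linarith
  obtain ⟨β, hβ⟩ : ∃ β : ℝ, β^2 = -(1/((a₀ + a₁ + a₂)^2 * a₂ * (a₀ + a₁))) := by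
    refine ⟨Real.sqrt _, Real.sq_sqrt ?_⟩
    have h2 : (a₀ + a₁ + a₂)^2 * a₂ * (a₀ + a₁) < 0 := by
      have : (a₀ + a₁ + a₂)^2 > 0 := by positivity
      nlinarith
    have : 1/((a₀ + a₁ + a₂)^2 * a₂ * (a₀ + a₁)) < 0 := one_div_neg.mpr h2
    linarith
  have hα' : α^2 * ((a₀ + a₁ + a₂) * a₀ * a₁ * (a₀ + a₁)) = -1 := by
    rw [hα]; field_simp
  have hβ' : β^2 * ((a₀ + a₁ + a₂)^2 * a₂ * (a₀ + a₁)) = -1 := by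
    rw [hβ]; field_simp
  apply evolIso_of_matrices _ _
    (!![a₀, a₁, a₂;
       -((a₀+a₁+a₂)*α*a₀*a₁), (a₀+a₁+a₂)*α*a₀*a₁, 0;
       -((a₀+a₁+a₂)*β*a₂*a₀), -((a₀+a₁+a₂)*β*a₂*a₁), (a₀+a₁+a₂)*β*a₂*(a₀+a₁)])
    (!![1/(a₀+a₁+a₂), α*a₁, β*a₂;
       1/(a₀+a₁+a₂), -(α*a₀), β*a₂;
       1/(a₀+a₁+a₂), 0, -(β*(a₀+a₁))])
  · ext i j
    fin_cases i <;> fin_cases j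
    all_goals try simp [Matrix.mul_apply, Fin.sum_univ_three, Matrix.one_apply]
    all_goals first
      | ring1
      | (field_simp; done)
      | (field_simp; ring1)
      | linear_combination -hα'
      | linear_combination -hβ'
  · rw [mul_eq_one_comm]
    ext i j
    fin_cases i <;> fin_cases j
    all_goals try simp [Matrix.mul_apply, Fin.sum_univ_three, Matrix.one_apply]
    all_goals first
      | ring1
      | (field_simp; done)
      | (field_simp; ring1)
      | linear_combination -hα'
      | linear_combination -hβ'
  · intro x y
    funext j
    fin_cases j <;>
      simp [evolMul, Matrix.mulVec, dotProduct, Fin.sum_univ_three,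
        Matrix.cons_val_zero, Matrix.cons_val_one, Matrix.head_cons, Matrix.cons_val_two,
        Matrix.tail_cons, Matrix.head_fin_const, Matrix.vecHead, Matrix.vecTail]
    · apply mul_left_cancel₀ hPne
      linear_combination ((a₀+a₁+a₂)*a₀*a₁*(x 1 - x 0)*(y 1 - y 0)) * hα' +
        (a₂*(a₀*x 0 + a₁*x 1 - (a₀+a₁)*x 2)*(a₀*y 0 + a₁*y 1 - (a₀+a₁)*y 2)) * hβ'
    · ring1


theorem stmt (h f g : ℝ → ℝ) (s t : ℝ) (hst0 : 0 ≤ s) (hst : s ≤ t)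
    (hhs : h s ≠ 0) (hht : h t ≠ 0)
    (c₁ c₂ c₃ : ℝ) (hc₁ : c₁ = 1 / h s + f s) (hc₂ : c₂ = 1 / h s - g s)
    (hc₃ : c₃ = g s - f s)
    (h1 : (1 / h s + f s) * (1 / h s - g s) * (g s - f s) ≠ 0)
    (h2 : (g s - f s) * (2 / h s + f s - g s) < 0)
    (h3 : (2 / h s) * (1 / h s + f s) * (1 / h s - g s) * (2 / h s + f s - g s) < 0) :
    EvolIso ((h t / 2) • (!![c₁, c₁, c₁; c₂, c₂, c₂; c₃, c₃, c₃] : Matrix (Fin 3) (Fin 3) ℝ)) (!![1, 0, 0; -1, 0, 0; -1, 0, 0] : Matrix (Fin 3) (Fin 3) ℝ) := by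
  have hk : h t / 2 ≠ 0 := div_ne_zero hht two_ne_zero
  have hc1 : (1 / h s + f s) ≠ 0 := fun hz => h1 (by rw [hz]; ring)
  have hc2 : (1 / h s - g s) ≠ 0 := fun hz => h1 (by rw [hz]; ring)
  have hc3 : (g s - f s) ≠ 0 := fun hz => h1 (by rw [hz]; ring)
  have hmat : (h t / 2) • (!![c₁, c₁, c₁; c₂, c₂, c₂; c₃, c₃, c₃] : Matrix (Fin 3) (Fin 3) ℝ)
      = !![h t / 2 * c₁, h t / 2 * c₁, h t / 2 * c₁;
           h t / 2 * c₂, h t / 2 * c₂, h t / 2 * c₂;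
           h t / 2 * c₃, h t / 2 * c₃, h t / 2 * c₃] := by
    ext i j
    fin_cases i <;> fin_cases j <;> simp [Matrix.smul_apply]
  rw [hmat]
  apply key
  · exact mul_ne_zero hk (by rw [hc₁]; exact hc1)
  · exact mul_ne_zero hk (by rw [hc₂]; exact hc2)
  · exact mul_ne_zero hk (by rw [hc₃]; exact hc3)
  · have e : (h t / 2 * c₃) * (h t / 2 * c₁ + h t / 2 * c₂)
        = (h t / 2)^2 * ((g s - f s) * (2 / h s + f s - g s)) := by
      rw [hc₁, hc₂, hc₃]; ring
    rw [e]
    exact mul_neg_of_pos_of_neg (by positivity) h2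
  · have e : (h t / 2 * c₁ + h t / 2 * c₂ + h t / 2 * c₃) * (h t / 2 * c₁) * (h t / 2 * c₂)
        * (h t / 2 * c₁ + h t / 2 * c₂)
        = (h t / 2)^4 * ((2 / h s) * (1 / h s + f s) * (1 / h s - g s) * (2 / h s + f s - g s)) := by
      rw [hc₁, hc₂, hc₃]; ring
    rw [e]
    exact mul_neg_of_pos_of_neg (by positivity) h3
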